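/- Let G be a finite simple graph on vertex set [n] with diameter at most 2, and suppose there is a squarefree monomial f in S = k[x_1,...,x_n] with NI(G)^2 : f = (x_1,...,x_n). Then f = x_1 x_2 ... x_n. -/

import Mathlib

open MvPolynomial
open scoped Classical

/-- The closed neighborhood of a vertex `i` of `G`, as a `Finset`. -/
noncomputable def closedNbhd {n : ℕ} (G : SimpleGraph (Fin n)) (i : Fin n) : Finset (Fin n) :=
  Finset.univ.filter (fun j => j = i ∨ G.Adj i j)

/-- The closed neighborhood ideal of `G` in `k[x_1, …, x_n]`. -/
noncomputable def NI (k : Type*) [Field k] {n : ℕ} (G : SimpleGraph (Fin n)) :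
    Ideal (MvPolynomial (Fin n) k) :=
  Ideal.span (Set.range fun i => ∏ j ∈ closedNbhd G i, X j)

/-- The maximal homogeneous ideal `(x_1, …, x_n)`. -/
noncomputable def maxIdeal (k : Type*) [Field k] (n : ℕ) : Ideal (MvPolynomial (Fin n) k) :=
  Ideal.span (Set.range (X : Fin n → MvPolynomial (Fin n) k))

/-- The exponent vector of the squarefree monomial with support `t`. -/
noncomputable def deg {n : ℕ} (t : Finset (Fin n)) : Fin n →₀ ℕ :=
  ∑ j ∈ t, Finsupp.single j 1

lemma deg_apply {n : ℕ} (t : Finset (Fin n)) (j : Fin n) :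
    deg t j = if j ∈ t then 1 else 0 := by
  classical
  simp [deg, Finsupp.finset_sum_apply, Finsupp.single_apply, Finset.sum_ite_eq t j (fun _ => 1)]

lemma prod_X_eq {n : ℕ} {k : Type*} [CommSemiring k] (t : Finset (Fin n)) :
    (∏ j ∈ t, (X j : MvPolynomial (Fin n) k)) = monomial (deg t) 1 := by
  classical
  induction t using Finset.induction with
  | empty => simp [deg]
  | insert _ _ h ih =>
      rw [Finset.prod_insert h, ih, X, monomial_mul, one_mul]
      congr 1
      rw [deg, deg, Finset.sum_insert h]

lemma mem_closedNbhd {n : ℕ} (G : SimpleGraph (Fin n)) (i j : Fin n) :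
    j ∈ closedNbhd G i ↔ j = i ∨ G.Adj i j := by simp [closedNbhd]

lemma common_vertex {n : ℕ} (G : SimpleGraph (Fin n)) (u w : Fin n)
    (h : G.edist u w ≤ 2) : ∃ z, z ∈ closedNbhd G u ∧ z ∈ closedNbhd G w := by
  have hne : G.edist u w ≠ ⊤ := fun ht => by simp [ht] at h
  obtain ⟨p, hp⟩ := SimpleGraph.exists_walk_of_edist_ne_top hne
  have hlen : (p.length : ℕ∞) ≤ 2 := hp ▸ h
  have hlen2 : p.length ≤ 2 := by exact_mod_cast hlen
  cases p with
  | nil => exact ⟨u, by simp [mem_closedNbhd], by simp [mem_closedNbhd]⟩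
  | cons h1 q =>
    rename_i b
    cases q with
    | nil => exact ⟨w, (mem_closedNbhd ..).2 (Or.inr h1), by simp [mem_closedNbhd]⟩
    | cons h2 r =>
      cases r with
      | nil =>
        exact ⟨b, (mem_closedNbhd ..).2 (Or.inr h1),
          (mem_closedNbhd ..).2 (Or.inr h2.symm)⟩
      | cons h3 r' => simp [SimpleGraph.Walk.length_cons] at hlen2

lemma NI_eq (k : Type*) [Field k] {n : ℕ} (G : SimpleGraph (Fin n)) :
    NI k G = Ideal.span ((fun e => (monomial e (1 : k))) ''
      (Set.range fun i => deg (closedNbhd G i))) := by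
  rw [NI, ← Set.range_comp]
  congr 1
  ext p
  simp [Function.comp, prod_X_eq]

lemma NI_sq (k : Type*) [Field k] {n : ℕ} (G : SimpleGraph (Fin n)) :
    NI k G ^ 2 = Ideal.span ((fun e => (monomial e (1 : k))) ''
      {e | ∃ u w, e = deg (closedNbhd G u) + deg (closedNbhd G w)}) := by
  rw [sq, NI_eq, Ideal.span_mul_span]
  congr 1
  ext p
  constructor
  · intro hp
    simp only [Set.mem_mul] at hp
    obtain ⟨a, ha, b, hb, rfl⟩ := hp
    obtain ⟨ea, ⟨u, rfl⟩, rfl⟩ := ha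
    obtain ⟨eb, ⟨w, rfl⟩, rfl⟩ := hb
    exact ⟨_, ⟨u, w, rfl⟩, by rw [monomial_mul, one_mul]⟩
  · rintro ⟨e, ⟨u, w, rfl⟩, rfl⟩
    simp only [Set.mem_iUnion, Set.mem_singleton_iff]
    exact ⟨_, ⟨_, ⟨u, rfl⟩, rfl⟩, _, ⟨_, ⟨w, rfl⟩, rfl⟩, by simp only [monomial_mul, one_mul]⟩

/-- If `G` has diameter at most `2` and `f = ∏_{i ∈ s} x_i` is a squarefree monomial with
`NI(G)^2 : f = (x_1, …, x_n)`, then `f = x_1 ⋯ x_n`. -/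
theorem support_eq_univ_of_colon_eq_max {n : ℕ} {k : Type*} [Field k]
    (G : SimpleGraph (Fin n)) (hdiam : ∀ u v : Fin n, G.edist u v ≤ 2)
    (s : Finset (Fin n))
    (hcolon : Submodule.colon (NI k G ^ 2)
        (Ideal.span {∏ i ∈ s, (X i : MvPolynomial (Fin n) k)}) = maxIdeal k n) :
    (∏ i ∈ s, (X i : MvPolynomial (Fin n) k)) = ∏ i : Fin n, X i := by
  suffices hs : s = Finset.univ by rw [hs]
  rw [Finset.eq_univ_iff_forall]
  intro v
  by_contra hv
  have hXv : (X v : MvPolynomial (Fin n) k) ∈ maxIdeal k n :=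
    Ideal.subset_span ⟨v, rfl⟩
  rw [← hcolon, Submodule.mem_colon] at hXv
  have hm : (X v : MvPolynomial (Fin n) k) * ∏ i ∈ s, X i ∈ NI k G ^ 2 :=
    hXv _ (Ideal.mem_span_singleton_self _)
  have heq : (X v : MvPolynomial (Fin n) k) * ∏ i ∈ s, X i =
      monomial (Finsupp.single v 1 + deg s) 1 := by
    rw [prod_X_eq, X, monomial_mul, one_mul]
  rw [heq, NI_sq] at hm
  obtain ⟨e, ⟨u, w, rfl⟩, hle⟩ :=
    mem_ideal_span_monomial_image.mp hm _ (by
      rw [support_monomial, if_neg one_ne_zero]; exact Finset.mem_singleton_self _)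
  obtain ⟨z, hzu, hzw⟩ := common_vertex G u w (hdiam u w)
  have := hle z
  simp only [Finsupp.add_apply, deg_apply, Finsupp.single_apply, if_pos hzu, if_pos hzw] at this
  by_cases hzv : v = z
  · subst hzv
    rw [if_pos rfl, if_neg hv] at this
    omega
  · rw [if_neg hzv] at this
    split at this <;> omega
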